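/- Let m ≥ 2 and let b be a distinguished index among {1,…,m}. For each i, let J_i* be the maximum of N_i i.i.d. random variables uniform on [c_i, d_i], all samples mutually independent, where for every i ≠ b one has N_i ≤ N_b and c_i ≤ c_b < d_i ≤ d_b (with c_i < d_i, c_b < d_b). Then the probability that J_b* is at least every other J_i* satisfies P(∩_{i≠b} {J_i* ≤ J_b*}) ≥ 1 − (1/2) Σ_{i≠b} ((d_i − c_b)/(d_b − c_b))^{N_b}. -/

import Mathlib

open MeasureTheory
open scoped ENNReal

/-- The uniform probability distribution on the interval `[c, d]`. -/
noncomputable def uniformIcc (c d : ℝ) : Measure ℝ :=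
  (ENNReal.ofReal (d - c))⁻¹ • volume.restrict (Set.Icc c d)

lemma uniformIcc_apply (c d : ℝ) (s : Set ℝ) :
    uniformIcc c d s = (ENNReal.ofReal (d - c))⁻¹ * volume (s ∩ Set.Icc c d) := by
  simp [uniformIcc, Measure.restrict_apply' measurableSet_Icc]

lemma isProbabilityMeasure_uniformIcc {c d : ℝ} (h : c < d) :
    IsProbabilityMeasure (uniformIcc c d) := by
  constructor
  rw [uniformIcc_apply, Set.univ_inter, Real.volume_Icc,
    ENNReal.inv_mul_cancel (by simp; linarith) (by simp)]

lemma uniformIcc_Iic {c d : ℝ} (h : c < d) (t : ℝ) :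
    uniformIcc c d (Set.Iic t) = ENNReal.ofReal ((min d t - c) / (d - c)) := by
  have hinter : Set.Iic t ∩ Set.Icc c d = Set.Icc c (min d t) := by
    ext x
    simp only [Set.mem_inter_iff, Set.mem_Iic, Set.mem_Icc, le_min_iff]
    tauto
  rw [uniformIcc_apply, hinter, Real.volume_Icc,
    ENNReal.ofReal_div_of_pos (sub_pos.2 h), ENNReal.div_eq_inv_mul]

lemma uniformIcc_Iio {c d : ℝ} (h : c < d) (t : ℝ) :
    uniformIcc c d (Set.Iio t) = ENNReal.ofReal ((min d t - c) / (d - c)) := by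
  have hvol : volume (Set.Iio t ∩ Set.Icc c d) = ENNReal.ofReal (min d t - c) := by
    apply le_antisymm
    · have : Set.Iio t ∩ Set.Icc c d ⊆ Set.Icc c (min d t) := by
        rintro x ⟨h1, h2, h3⟩
        exact ⟨h2, le_min h3 (le_of_lt h1)⟩
      calc volume (Set.Iio t ∩ Set.Icc c d) ≤ volume (Set.Icc c (min d t)) := measure_mono this
        _ = ENNReal.ofReal (min d t - c) := Real.volume_Icc
    · have : Set.Ico c (min d t) ⊆ Set.Iio t ∩ Set.Icc c d := by
        rintro x ⟨h1, h2⟩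
        rw [lt_min_iff] at h2
        exact ⟨h2.2, h1, le_of_lt h2.1⟩
      calc ENNReal.ofReal (min d t - c) = volume (Set.Ico c (min d t)) := Real.volume_Ico.symm
        _ ≤ volume (Set.Iio t ∩ Set.Icc c d) := measure_mono this
  rw [uniformIcc_apply, hvol, ENNReal.ofReal_div_of_pos (sub_pos.2 h), ENNReal.div_eq_inv_mul]

lemma measurable_supFin {n : ℕ} : Measurable fun y : Fin n → ℝ => ⨆ j, y j :=
  Measurable.iSup fun j => measurable_pi_apply j

lemma sup_le_iff_fin {n : ℕ} [Nonempty (Fin n)] (y : Fin n → ℝ) (t : ℝ) :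
    (⨆ j, y j) ≤ t ↔ ∀ j, y j ≤ t :=
  ⟨fun h' j => le_trans (le_ciSup (Set.Finite.bddAbove (Set.finite_range y)) j) h',
    fun h' => ciSup_le h'⟩

lemma sup_lt_iff_fin {n : ℕ} [Nonempty (Fin n)] (y : Fin n → ℝ) (t : ℝ) :
    (⨆ j, y j) < t ↔ ∀ j, y j < t := by
  constructor
  · exact fun h' j => lt_of_le_of_lt (le_ciSup (Set.Finite.bddAbove (Set.finite_range y)) j) h'
  · intro h'
    obtain ⟨j₀, hj⟩ := exists_eq_ciSup_of_finite (f := y)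
    rw [← hj]
    exact h' j₀

lemma nu_sup_le {n : ℕ} (hn : 0 < n) {c d : ℝ} (h : c < d) (t : ℝ) :
    Measure.pi (fun _ : Fin n => uniformIcc c d) {y | (⨆ j, y j) ≤ t} =
      ENNReal.ofReal ((min d t - c) / (d - c)) ^ n := by
  have : Nonempty (Fin n) := Fin.pos_iff_nonempty.mp hn
  haveI : IsProbabilityMeasure (uniformIcc c d) := isProbabilityMeasure_uniformIcc h
  have hset : {y : Fin n → ℝ | (⨆ j, y j) ≤ t} = Set.pi Set.univ fun _ => Set.Iic t := by
    ext y
    simp [sup_le_iff_fin, Set.mem_pi, Pi.le_def]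
  rw [hset, Measure.pi_pi]
  simp [uniformIcc_Iic h, Finset.prod_const]

lemma nu_sup_lt {n : ℕ} (hn : 0 < n) {c d : ℝ} (h : c < d) (t : ℝ) :
    Measure.pi (fun _ : Fin n => uniformIcc c d) {y | (⨆ j, y j) < t} =
      ENNReal.ofReal ((min d t - c) / (d - c)) ^ n := by
  have : Nonempty (Fin n) := Fin.pos_iff_nonempty.mp hn
  haveI : IsProbabilityMeasure (uniformIcc c d) := isProbabilityMeasure_uniformIcc h
  have hset : {y : Fin n → ℝ | (⨆ j, y j) < t} = Set.pi Set.univ fun _ => Set.Iio t := by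
    ext y
    simp [sup_lt_iff_fin, Set.mem_pi]
  rw [hset, Measure.pi_pi]
  simp [uniformIcc_Iio h, Finset.prod_const]

lemma nu_sup_eq_zero {n : ℕ} (hn : 0 < n) {c d : ℝ} (h : c < d) (t : ℝ) :
    Measure.pi (fun _ : Fin n => uniformIcc c d) {y | (⨆ j, y j) = t} = 0 := by
  have : Nonempty (Fin n) := Fin.pos_iff_nonempty.mp hn
  haveI : IsProbabilityMeasure (uniformIcc c d) := isProbabilityMeasure_uniformIcc h
  have hsub : {y : Fin n → ℝ | (⨆ j, y j) = t} ⊆ ⋃ j, Function.eval j ⁻¹' {t} := by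
    intro y hy
    obtain ⟨j₀, hj⟩ := exists_eq_ciSup_of_finite (f := y)
    exact Set.mem_iUnion.2 ⟨j₀, by simp only [Set.mem_preimage, Function.eval, Set.mem_singleton_iff, hj]; exact hy⟩
  refine measure_mono_null hsub (measure_iUnion_null fun j => ?_)
  apply Measure.pi_eval_preimage_null
  rw [uniformIcc_apply]
  have : volume ({t} ∩ Set.Icc c d) = 0 :=
    measure_mono_null Set.inter_subset_left Real.volume_singleton
  rw [this, mul_zero]

lemma pi_map_pair {ι : Type*} [Fintype ι] [DecidableEq ι] {α : ι → Type*}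
    [∀ k, MeasurableSpace (α k)] (μ : ∀ k, Measure (α k))
    [∀ k, IsProbabilityMeasure (μ k)] {i j : ι} (hij : i ≠ j) :
    (Measure.pi μ).map (fun ω => (ω i, ω j)) = (μ i).prod (μ j) := by
  refine (Measure.prod_eq fun s t hs ht => ?_).symm
  rw [Measure.map_apply ((measurable_pi_apply i).prodMk (measurable_pi_apply j)) (hs.prod ht)]
  have hpre : (fun ω : ∀ k, α k => (ω i, ω j)) ⁻¹' (s ×ˢ t) =
      Set.pi Set.univ
        (Function.update (Function.update (fun k => (Set.univ : Set (α k))) i s) j t) := by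
    ext ω
    simp only [Set.mem_preimage, Set.mem_prod, Set.mem_pi, Set.mem_univ, forall_true_left]
    constructor
    · rintro ⟨h1, h2⟩ k
      rcases eq_or_ne k j with rfl | hkj
      · simpa using h2
      rcases eq_or_ne k i with rfl | hki
      · rw [Function.update_of_ne hkj, Function.update_self]
        exact h1
      · rw [Function.update_of_ne hkj, Function.update_of_ne hki]
        trivial
    · intro h
      refine ⟨?_, ?_⟩
      · have := h i
        rwa [Function.update_of_ne hij, Function.update_self] at this
      · have := h j
        rwa [Function.update_self] at this
  rw [hpre, Measure.pi_pi]
  rw [← Finset.prod_subset (Finset.subset_univ ({i, j} : Finset ι)) (fun k _ hk => ?_)]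
  · rw [Finset.prod_pair hij, Function.update_of_ne hij, Function.update_self,
      Function.update_self]
  · simp only [Finset.mem_insert, Finset.mem_singleton, not_or] at hk
    rw [Function.update_of_ne hk.2, Function.update_of_ne hk.1]
    exact measure_univ

lemma key_pow_bound {cb db ci di : ℝ} {Nb Ni : ℕ} (hNb : 0 < Nb) (hNi : Ni ≤ Nb)
    (hci : ci < di) (hcb : cb < db) (hccb : ci ≤ cb) (hcbdi : cb < di) (hdd : di ≤ db)
    {t : ℝ} (ht1 : ci ≤ t) (ht2 : t ≤ di) :
    ENNReal.ofReal ((t - cb) / (db - cb)) ^ Nb ≤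
      ENNReal.ofReal ((di - cb) / (db - cb)) ^ Nb *
        ENNReal.ofReal ((t - ci) / (di - ci)) ^ Ni := by
  rcases lt_or_ge t cb with hlt | hge
  · have : (t - cb) / (db - cb) ≤ 0 :=
      div_nonpos_of_nonpos_of_nonneg (by linarith) (by linarith)
    rw [ENNReal.ofReal_of_nonpos this, zero_pow hNb.ne']
    exact zero_le
  · have hdbcb : (0:ℝ) < db - cb := by linarith
    have hdicb : (0:ℝ) < di - cb := by linarith
    have hdici : (0:ℝ) < di - ci := by linarith
    set r := (di - cb) / (db - cb) with hr
    set q := (t - cb) / (di - cb) with hq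
    set z := (t - ci) / (di - ci) with hz
    have hq0 : 0 ≤ q := div_nonneg (by linarith) hdicb.le
    have hq1 : q ≤ 1 := (div_le_one hdicb).2 (by linarith)
    have hz0 : 0 ≤ z := div_nonneg (by linarith) hdici.le
    have hr0 : 0 ≤ r := div_nonneg hdicb.le hdbcb.le
    have hA : (t - cb) / (db - cb) = r * q := by
      rw [hr, hq, div_mul_div_comm, mul_comm (di - cb) (t - cb),
        mul_div_mul_right (t - cb) (db - cb) hdicb.ne']
    have hqz : q ≤ z := by
      rw [hq, hz, div_le_div_iff₀ hdicb hdici]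
      nlinarith
    have hreal : ((t - cb) / (db - cb)) ^ Nb ≤ r ^ Nb * z ^ Ni := by
      rw [hA, mul_pow]
      refine mul_le_mul_of_nonneg_left ?_ (pow_nonneg hr0 _)
      calc q ^ Nb ≤ q ^ Ni := pow_le_pow_of_le_one hq0 hq1 hNi
        _ ≤ z ^ Ni := pow_le_pow_left₀ hq0 hqz Ni
    calc ENNReal.ofReal ((t - cb) / (db - cb)) ^ Nb
        = ENNReal.ofReal (((t - cb) / (db - cb)) ^ Nb) := by
          rw [ENNReal.ofReal_pow (by rw [hA]; positivity)]
      _ ≤ ENNReal.ofReal (r ^ Nb * z ^ Ni) := ENNReal.ofReal_le_ofReal hreal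
      _ = ENNReal.ofReal (r ^ Nb) * ENNReal.ofReal (z ^ Ni) :=
          ENNReal.ofReal_mul (pow_nonneg hr0 _)
      _ = ENNReal.ofReal r ^ Nb * ENNReal.ofReal z ^ Ni := by
          rw [ENNReal.ofReal_pow hr0, ENNReal.ofReal_pow hz0]

lemma half_bound {n : ℕ} (hn : 0 < n) {c d : ℝ} (h : c < d) :
    ((Measure.pi fun _ : Fin n => uniformIcc c d).prod
        (Measure.pi fun _ : Fin n => uniformIcc c d))
      {p : (Fin n → ℝ) × (Fin n → ℝ) | (⨆ j, p.2 j) ≤ ⨆ j, p.1 j} ≤ 2⁻¹ := by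
  haveI : IsProbabilityMeasure (uniformIcc c d) := isProbabilityMeasure_uniformIcc h
  set ν := Measure.pi fun _ : Fin n => uniformIcc c d with hν
  set P := ν.prod ν with hP
  have msup1 : Measurable fun p : (Fin n → ℝ) × (Fin n → ℝ) => ⨆ j, p.1 j :=
    measurable_supFin.comp measurable_fst
  have msup2 : Measurable fun p : (Fin n → ℝ) × (Fin n → ℝ) => ⨆ j, p.2 j :=
    measurable_supFin.comp measurable_snd
  have hSle : MeasurableSet {p : (Fin n → ℝ) × (Fin n → ℝ) | (⨆ j, p.2 j) ≤ ⨆ j, p.1 j} :=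
    measurableSet_le msup2 msup1
  have hSlt : MeasurableSet {p : (Fin n → ℝ) × (Fin n → ℝ) | (⨆ j, p.2 j) < ⨆ j, p.1 j} :=
    measurableSet_lt msup2 msup1
  have hSlt' : MeasurableSet {p : (Fin n → ℝ) × (Fin n → ℝ) | (⨆ j, p.1 j) < ⨆ j, p.2 j} :=
    measurableSet_lt msup1 msup2
  have hSeq : MeasurableSet {p : (Fin n → ℝ) × (Fin n → ℝ) | (⨆ j, p.2 j) = ⨆ j, p.1 j} :=
    measurableSet_eq_fun msup2 msup1
  -- diagonal null
  have heq0 : P {p : (Fin n → ℝ) × (Fin n → ℝ) | (⨆ j, p.2 j) = ⨆ j, p.1 j} = 0 := by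
    rw [hP, Measure.prod_apply hSeq]
    have : ∀ x : Fin n → ℝ,
        ν (Prod.mk x ⁻¹' {p : (Fin n → ℝ) × (Fin n → ℝ) | (⨆ j, p.2 j) = ⨆ j, p.1 j}) = 0 :=
      fun x => nu_sup_eq_zero hn h (⨆ j, x j)
    exact (lintegral_congr fun x => this x).trans lintegral_zero
  -- swap symmetry
  have hswap : P {p : (Fin n → ℝ) × (Fin n → ℝ) | (⨆ j, p.1 j) < ⨆ j, p.2 j} =
      P {p : (Fin n → ℝ) × (Fin n → ℝ) | (⨆ j, p.2 j) < ⨆ j, p.1 j} := by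
    have : {p : (Fin n → ℝ) × (Fin n → ℝ) | (⨆ j, p.1 j) < ⨆ j, p.2 j} =
        Prod.swap ⁻¹' {p : (Fin n → ℝ) × (Fin n → ℝ) | (⨆ j, p.2 j) < ⨆ j, p.1 j} := rfl
    rw [this, ← Measure.map_apply measurable_swap hSlt, hP, Measure.prod_swap]
  -- le set bounded by lt set
  have hlele : P {p : (Fin n → ℝ) × (Fin n → ℝ) | (⨆ j, p.2 j) ≤ ⨆ j, p.1 j} ≤
      P {p : (Fin n → ℝ) × (Fin n → ℝ) | (⨆ j, p.2 j) < ⨆ j, p.1 j} := by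
    calc P {p : (Fin n → ℝ) × (Fin n → ℝ) | (⨆ j, p.2 j) ≤ ⨆ j, p.1 j}
        ≤ P ({p : (Fin n → ℝ) × (Fin n → ℝ) | (⨆ j, p.2 j) < ⨆ j, p.1 j} ∪
            {p : (Fin n → ℝ) × (Fin n → ℝ) | (⨆ j, p.2 j) = ⨆ j, p.1 j}) := by
          apply measure_mono
          intro p hp
          simp only [Set.mem_setOf_eq, Set.mem_union] at *
          rcases hp.lt_or_eq with h' | h'
          · exact Or.inl h'
          · exact Or.inr h'
      _ ≤ P {p : (Fin n → ℝ) × (Fin n → ℝ) | (⨆ j, p.2 j) < ⨆ j, p.1 j} +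
          P {p : (Fin n → ℝ) × (Fin n → ℝ) | (⨆ j, p.2 j) = ⨆ j, p.1 j} := measure_union_le _ _
      _ = P {p : (Fin n → ℝ) × (Fin n → ℝ) | (⨆ j, p.2 j) < ⨆ j, p.1 j} := by
          rw [heq0, add_zero]
  -- disjoint union bound
  have hdisj : P {p : (Fin n → ℝ) × (Fin n → ℝ) | (⨆ j, p.2 j) ≤ ⨆ j, p.1 j} +
      P {p : (Fin n → ℝ) × (Fin n → ℝ) | (⨆ j, p.1 j) < ⨆ j, p.2 j} ≤ 1 := by
    rw [← measure_union ?_ hSlt']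
    · exact (measure_mono (Set.subset_univ _)).trans_eq measure_univ
    · refine Set.disjoint_left.2 fun p hp hp' => ?_
      simp only [Set.mem_setOf_eq] at hp hp'
      exact absurd hp (not_le.2 hp')
  have h2 : P {p : (Fin n → ℝ) × (Fin n → ℝ) | (⨆ j, p.2 j) ≤ ⨆ j, p.1 j} * 2 ≤ 1 := by
    rw [mul_two]
    calc P {p : (Fin n → ℝ) × (Fin n → ℝ) | (⨆ j, p.2 j) ≤ ⨆ j, p.1 j} +
        P {p : (Fin n → ℝ) × (Fin n → ℝ) | (⨆ j, p.2 j) ≤ ⨆ j, p.1 j}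
        ≤ P {p : (Fin n → ℝ) × (Fin n → ℝ) | (⨆ j, p.2 j) ≤ ⨆ j, p.1 j} +
          P {p : (Fin n → ℝ) × (Fin n → ℝ) | (⨆ j, p.1 j) < ⨆ j, p.2 j} := by
          refine add_le_add le_rfl ?_
          rw [hswap]
          exact hlele
      _ ≤ 1 := hdisj
  have := (ENNReal.le_div_iff_mul_le (Or.inl two_ne_zero) (Or.inl ENNReal.ofNat_ne_top)).2 h2
  simpa [ENNReal.div_eq_inv_mul] using this

lemma pair_bound {m : ℕ} (b i : Fin m) (hib : i ≠ b)
    (N : Fin m → ℕ) (c d : Fin m → ℝ)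
    (hN : ∀ k, 0 < N k) (hcd : ∀ k, c k < d k)
    (hNle : N i ≤ N b) (hcc : c i ≤ c b) (hcbd : c b < d i) (hdd : d i ≤ d b) :
    (Measure.pi fun k : Fin m => Measure.pi fun _ : Fin (N k) => uniformIcc (c k) (d k))
      {ω : ∀ k : Fin m, Fin (N k) → ℝ | (⨆ j, ω b j) < ⨆ j, ω i j} ≤
      ENNReal.ofReal (1 / 2 * ((d i - c b) / (d b - c b)) ^ (N b)) := by
  haveI : ∀ k, IsProbabilityMeasure (uniformIcc (c k) (d k)) :=
    fun k => isProbabilityMeasure_uniformIcc (hcd k)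
  haveI : Nonempty (Fin (N i)) := Fin.pos_iff_nonempty.mp (hN i)
  set νi := Measure.pi fun _ : Fin (N i) => uniformIcc (c i) (d i) with hνi
  set νb := Measure.pi fun _ : Fin (N b) => uniformIcc (c b) (d b) with hνb
  set S : Set ((Fin (N i) → ℝ) × (Fin (N b) → ℝ)) :=
    {p | (⨆ j, p.2 j) < ⨆ j, p.1 j} with hSdef
  have hS : MeasurableSet S :=
    measurableSet_lt (measurable_supFin.comp measurable_snd)
      (measurable_supFin.comp measurable_fst)
  have hSle : MeasurableSet {p : (Fin (N i) → ℝ) × (Fin (N i) → ℝ) |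
      (⨆ j, p.2 j) ≤ ⨆ j, p.1 j} :=
    measurableSet_le (measurable_supFin.comp measurable_snd)
      (measurable_supFin.comp measurable_fst)
  have hmeasT : Measurable fun ω : ∀ k : Fin m, Fin (N k) → ℝ => (ω i, ω b) :=
    (measurable_pi_apply i).prodMk (measurable_pi_apply b)
  have hae : ∀ᵐ x ∂νi, ∀ j, x j ∈ Set.Icc (c i) (d i) := by
    rw [ae_all_iff]
    intro j
    have hnull : uniformIcc (c i) (d i) (Set.Icc (c i) (d i))ᶜ = 0 := by
      rw [uniformIcc_apply, Set.compl_inter_self, measure_empty, mul_zero]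
    have := Measure.pi_eval_preimage_null
      (μ := fun _ : Fin (N i) => uniformIcc (c i) (d i)) hnull (i := j)
    exact this
  have hr0 : (0:ℝ) ≤ (d i - c b) / (d b - c b) :=
    div_nonneg (by linarith) (by linarith [hcd b])
  set μt := Measure.pi fun k : Fin m => Measure.pi fun _ : Fin (N k) => uniformIcc (c k) (d k)
    with hμt
  calc μt {ω : ∀ k : Fin m, Fin (N k) → ℝ | (⨆ j, ω b j) < ⨆ j, ω i j}
      = (νi.prod νb) S := by
        rw [← pi_map_pair (fun k => Measure.pi fun _ : Fin (N k) => uniformIcc (c k) (d k)) hib,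
          Measure.map_apply hmeasT hS]
        rfl
    _ = ∫⁻ x, νb (Prod.mk x ⁻¹' S) ∂νi := Measure.prod_apply hS
    _ ≤ ∫⁻ x, ENNReal.ofReal ((d i - c b) / (d b - c b)) ^ N b *
          νi {y | (⨆ j, y j) ≤ ⨆ j, x j} ∂νi := by
        refine lintegral_mono_ae (hae.mono fun x hx => ?_)
        have hx1 : c i ≤ ⨆ j, x j :=
          le_trans (hx ⟨0, hN i⟩).1
            (le_ciSup (Set.Finite.bddAbove (Set.finite_range x)) ⟨0, hN i⟩)
        have hx2 : (⨆ j, x j) ≤ d i := ciSup_le fun j => (hx j).2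
        have hpre : Prod.mk x ⁻¹' S = {y : Fin (N b) → ℝ | (⨆ j, y j) < ⨆ j, x j} := rfl
        rw [hpre, nu_sup_lt (hN b) (hcd b), nu_sup_le (hN i) (hcd i),
          min_eq_right (hx2.trans hdd), min_eq_right hx2]
        exact key_pow_bound (hN b) hNle (hcd i) (hcd b) hcc hcbd hdd hx1 hx2
    _ = ENNReal.ofReal ((d i - c b) / (d b - c b)) ^ N b *
          ∫⁻ x, νi {y | (⨆ j, y j) ≤ ⨆ j, x j} ∂νi :=
        lintegral_const_mul' _ _ (ENNReal.pow_ne_top ENNReal.ofReal_ne_top)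
    _ = ENNReal.ofReal ((d i - c b) / (d b - c b)) ^ N b *
          (νi.prod νi) {p : (Fin (N i) → ℝ) × (Fin (N i) → ℝ) | (⨆ j, p.2 j) ≤ ⨆ j, p.1 j} := by
        rw [Measure.prod_apply hSle]
        rfl
    _ ≤ ENNReal.ofReal ((d i - c b) / (d b - c b)) ^ N b * 2⁻¹ :=
        mul_le_mul_right (half_bound (hN i) (hcd i)) _
    _ = ENNReal.ofReal (1 / 2 * ((d i - c b) / (d b - c b)) ^ (N b)) := by
        rw [← ENNReal.ofReal_pow hr0]
        rw [show (2⁻¹ : ℝ≥0∞) = ENNReal.ofReal (1/2) by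
          rw [ENNReal.ofReal_div_of_pos (by norm_num), ENNReal.ofReal_one,
            ENNReal.ofReal_ofNat, one_div]]
        rw [← ENNReal.ofReal_mul (pow_nonneg hr0 _), mul_comm]

/-- Bonferroni bound: with `m ≥ 2` start nodes and for each `i` the maximum
`J_i*` of `N_i` i.i.d. uniform samples on `[c_i, d_i]` (all samples mutually
independent), where for every `i ≠ b` we have `N_i ≤ N_b` and
`c_i ≤ c_b < d_i ≤ d_b`, the probability that `J_b*` is at least every other
`J_i*` is at least `1 − (1/2) Σ_{i≠b} ((d_i − c_b)/(d_b − c_b))^{N_b}`. -/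
theorem stmt7 (m : ℕ) (hm : 2 ≤ m) (b : Fin m)
    (N : Fin m → ℕ) (c d : Fin m → ℝ)
    (hN : ∀ i, 0 < N i) (hcd : ∀ i, c i < d i)
    (hNle : ∀ i, i ≠ b → N i ≤ N b)
    (hcc : ∀ i, i ≠ b → c i ≤ c b)
    (hcbd : ∀ i, i ≠ b → c b < d i)
    (hdd : ∀ i, i ≠ b → d i ≤ d b) :
    ENNReal.ofReal (1 - (1 / 2) *
        ∑ i ∈ Finset.univ.filter (fun i => i ≠ b),
          ((d i - c b) / (d b - c b)) ^ (N b)) ≤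
      (Measure.pi fun i : Fin m =>
          Measure.pi fun _ : Fin (N i) => uniformIcc (c i) (d i))
        {ω : ∀ i : Fin m, Fin (N i) → ℝ |
          ∀ i, i ≠ b → (⨆ j, ω i j) ≤ ⨆ j, ω b j} := by
  haveI : ∀ k, IsProbabilityMeasure (uniformIcc (c k) (d k)) :=
    fun k => isProbabilityMeasure_uniformIcc (hcd k)
  set μt := Measure.pi fun i : Fin m => Measure.pi fun _ : Fin (N i) => uniformIcc (c i) (d i)
    with hμt
  haveI : IsProbabilityMeasure μt := by rw [hμt]; infer_instance
  set E := {ω : ∀ i : Fin m, Fin (N i) → ℝ |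
      ∀ i, i ≠ b → (⨆ j, ω i j) ≤ ⨆ j, ω b j} with hE
  have msupk : ∀ k : Fin m, Measurable fun ω : ∀ i : Fin m, Fin (N i) → ℝ => ⨆ j, ω k j :=
    fun k => Measurable.iSup fun j => (measurable_pi_apply j).comp (measurable_pi_apply k)
  have hEmeas : MeasurableSet E := by
    have hrw : E = ⋂ i ∈ {i : Fin m | i ≠ b}, {ω | (⨆ j, ω i j) ≤ ⨆ j, ω b j} := by
      ext ω
      simp [hE]
    rw [hrw]
    exact MeasurableSet.biInter (Set.to_countable _)
      fun i _ => measurableSet_le (msupk i) (msupk b)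
  have hcompl : μt Eᶜ ≤ ∑ i ∈ Finset.univ.filter (fun i => i ≠ b),
      ENNReal.ofReal (1 / 2 * ((d i - c b) / (d b - c b)) ^ (N b)) := by
    have hsub : Eᶜ ⊆ ⋃ i ∈ Finset.univ.filter (fun i => i ≠ b),
        {ω : ∀ k : Fin m, Fin (N k) → ℝ | (⨆ j, ω b j) < ⨆ j, ω i j} := by
      intro ω hω
      simp only [hE, Set.mem_compl_iff, Set.mem_setOf_eq, not_forall] at hω
      obtain ⟨i, hib, hlt⟩ := hω
      exact Set.mem_biUnion (show i ∈ Finset.univ.filter (fun i => i ≠ b) by simp [hib])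
        (not_le.1 hlt)
    calc μt Eᶜ ≤ μt (⋃ i ∈ Finset.univ.filter (fun i => i ≠ b),
          {ω : ∀ k : Fin m, Fin (N k) → ℝ | (⨆ j, ω b j) < ⨆ j, ω i j}) := measure_mono hsub
      _ ≤ ∑ i ∈ Finset.univ.filter (fun i => i ≠ b),
          μt {ω : ∀ k : Fin m, Fin (N k) → ℝ | (⨆ j, ω b j) < ⨆ j, ω i j} :=
        measure_biUnion_finset_le _ _
      _ ≤ ∑ i ∈ Finset.univ.filter (fun i => i ≠ b),
          ENNReal.ofReal (1 / 2 * ((d i - c b) / (d b - c b)) ^ (N b)) := by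
        refine Finset.sum_le_sum fun i hi => ?_
        have hib : i ≠ b := by simpa using hi
        exact pair_bound b i hib N c d hN hcd (hNle i hib) (hcc i hib) (hcbd i hib) (hdd i hib)
  have hterm : ∀ i ∈ Finset.univ.filter (fun i : Fin m => i ≠ b),
      (0:ℝ) ≤ 1 / 2 * ((d i - c b) / (d b - c b)) ^ (N b) := by
    intro i hi
    have hib : i ≠ b := by simpa using hi
    have : (0:ℝ) ≤ (d i - c b) / (d b - c b) :=
      div_nonneg (by linarith [hcbd i hib]) (by linarith [hcd b])
    positivity
  have hsum : ∑ i ∈ Finset.univ.filter (fun i : Fin m => i ≠ b),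
      ENNReal.ofReal (1 / 2 * ((d i - c b) / (d b - c b)) ^ (N b)) =
      ENNReal.ofReal ((1 / 2) * ∑ i ∈ Finset.univ.filter (fun i => i ≠ b),
        ((d i - c b) / (d b - c b)) ^ (N b)) := by
    rw [← ENNReal.ofReal_sum_of_nonneg hterm, Finset.mul_sum]
  have key : μt Eᶜ ≤ ENNReal.ofReal ((1 / 2) *
      ∑ i ∈ Finset.univ.filter (fun i => i ≠ b),
        ((d i - c b) / (d b - c b)) ^ (N b)) := hcompl.trans_eq hsum
  have hE1 : μt E = 1 - μt Eᶜ := by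
    have := measure_compl hEmeas.compl (measure_ne_top μt Eᶜ)
    rwa [compl_compl, measure_univ] at this
  set s := (1 / 2) * ∑ i ∈ Finset.univ.filter (fun i : Fin m => i ≠ b),
      ((d i - c b) / (d b - c b)) ^ (N b) with hs
  calc ENNReal.ofReal (1 - s) ≤ 1 - ENNReal.ofReal s := by
        rcases le_or_gt s 1 with h1 | h1
        · refine ENNReal.le_sub_of_add_le_right ENNReal.ofReal_ne_top ?_
          rw [← ENNReal.ofReal_add (by linarith) ?_]
          · rw [sub_add_cancel, ENNReal.ofReal_one]
          · have : (0:ℝ) ≤ ∑ i ∈ Finset.univ.filter (fun i : Fin m => i ≠ b),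
                ((d i - c b) / (d b - c b)) ^ (N b) :=
              Finset.sum_nonneg fun i hi => by nlinarith [hterm i hi]
            rw [hs]; positivity
        · rw [ENNReal.ofReal_of_nonpos (by linarith)]
          exact zero_le
    _ ≤ 1 - μt Eᶜ := tsub_le_tsub_left key 1
    _ = μt E := hE1.symm
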